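/- Let m ≥ 3 and let E := GaloisField 2 m. Then the number of pairs (a₀, a₁) ∈ E × E such that the map x ↦ a₁·x^2 + a₀·x + a₁^(2^(m−1))·x^(2^(m−1)) has no nonzero root (equivalently, such that the corresponding symmetric bilinear form B_{(a₀,a₁)}(x,y) = Tr(y·(a₁x² + a₀x + a₁^{2^{m−1}}x^{2^{m−1}})) is nonsingular) is at least 4^(m−1): Fintype.card {p : E × E // ∀ x : E, p.2 * x^2 + p.1 * x + p.2 ^ (2^(m−1)) * x ^ (2^(m−1)) = 0 → x = 0} ≥ 4^(m−1). -/

import Mathlib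

open Finset Polynomial
namespace Stmt18Aux

variable {m : ℕ}

noncomputable def L (m : ℕ) (a : GaloisField 2 m × GaloisField 2 m) (x : GaloisField 2 m) :
    GaloisField 2 m :=
  a.2 * x ^ 2 + a.1 * x + a.2 ^ 2 ^ (m - 1) * x ^ 2 ^ (m - 1)

section basic
variable (hm : 1 ≤ m)
include hm

lemma pow_card (z : GaloisField 2 m) : z ^ 2 ^ m = z := by
  letI : Fintype (GaloisField 2 m) := Fintype.ofFinite _
  have h : Fintype.card (GaloisField 2 m) = 2 ^ m := by
    rw [← Nat.card_eq_fintype_card]; exact GaloisField.card 2 m (by omega)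
  calc z ^ 2 ^ m = z ^ Fintype.card (GaloisField 2 m) := by rw [h]
  _ = z := FiniteField.pow_card z

lemma sq_pow (z : GaloisField 2 m) : (z ^ 2 ^ (m - 1)) ^ 2 = z := by
  rw [← pow_mul]
  have : 2 ^ (m - 1) * 2 = 2 ^ m := by
    rw [← pow_succ]; congr 1; omega
  rw [this, pow_card hm]

lemma pow_sq (z : GaloisField 2 m) : (z ^ 2) ^ 2 ^ (m - 1) = z := by
  rw [← pow_mul, mul_comm, pow_mul]
  exact sq_pow hm z

lemma sq_inj {x y : GaloisField 2 m} (h : x ^ 2 = y ^ 2) : x = y := by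
  have := congrArg (· ^ 2 ^ (m - 1)) h
  simpa [pow_sq hm] using this

omit hm in
lemma two_zero : (2 : GaloisField 2 m) = 0 := CharTwo.two_eq_zero

/-- Existence and uniqueness of the nonzero pair killing two given distinct nonzero points. -/
lemma exists_unique_pair {x y : GaloisField 2 m} (hx : x ≠ 0) (hy : y ≠ 0) (hxy : x ≠ y) :
    ∃! a : GaloisField 2 m × GaloisField 2 m,
      a ≠ 0 ∧ L m a x = 0 ∧ L m a y = 0 := by
  have h2 : (2 : GaloisField 2 m) = 0 := two_zero
  have hxy0 : x + y ≠ 0 := by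
    intro h
    apply hxy
    have : x = -y := by linear_combination h
    rw [this]; exact (CharTwo.neg_eq y)
  have hden : x * y * (x + y) ≠ 0 := mul_ne_zero (mul_ne_zero hx hy) hxy0
  have hnum : y * x ^ 2 ^ (m - 1) + x * y ^ 2 ^ (m - 1) ≠ 0 := by
    intro h
    have h' : y * x ^ 2 ^ (m - 1) = x * y ^ 2 ^ (m - 1) := by
      have : y * x ^ 2 ^ (m - 1) = -(x * y ^ 2 ^ (m - 1)) := by linear_combination h
      rw [this, CharTwo.neg_eq]
    have hsq : (y * x ^ 2 ^ (m - 1)) ^ 2 = (x * y ^ 2 ^ (m - 1)) ^ 2 := by rw [h']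
    have : y ^ 2 * x = x ^ 2 * y := by
      have e1 : (x ^ 2 ^ (m - 1)) ^ 2 = x := sq_pow hm x
      have e2 : (y ^ 2 ^ (m - 1)) ^ 2 = y := sq_pow hm y
      calc y ^ 2 * x = y ^ 2 * (x ^ 2 ^ (m - 1)) ^ 2 := by rw [e1]
      _ = (y * x ^ 2 ^ (m - 1)) ^ 2 := by ring
      _ = (x * y ^ 2 ^ (m - 1)) ^ 2 := hsq
      _ = x ^ 2 * (y ^ 2 ^ (m - 1)) ^ 2 := by ring
      _ = x ^ 2 * y := by rw [e2]
    have : x * y * (x + y) = 0 := by linear_combination this + x ^ 2 * y * h2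
    exact hden this
  obtain ⟨d, hdkey⟩ :
      ∃ d : GaloisField 2 m,
        d * (x * y * (x + y)) = y * x ^ 2 ^ (m - 1) + x * y ^ 2 ^ (m - 1) :=
    ⟨_, div_mul_cancel₀ _ hden⟩
  have hdne : d ≠ 0 := by
    intro h; rw [h, zero_mul] at hdkey; exact hnum hdkey.symm
  obtain ⟨a₀, ha₀key⟩ :
      ∃ a₀ : GaloisField 2 m, a₀ * x = d ^ 2 * x ^ 2 + d * x ^ 2 ^ (m - 1) :=
    ⟨_, div_mul_cancel₀ _ hx⟩
  have hdsq : (d ^ 2) ^ 2 ^ (m - 1) = d := pow_sq hm d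
  refine ⟨(a₀, d ^ 2), ⟨?_, ?_, ?_⟩, ?_⟩
  · intro h
    exact hdne (pow_eq_zero_iff (n := 2) (by norm_num) |>.mp (congrArg Prod.snd h))
  · show d ^ 2 * x ^ 2 + a₀ * x + (d ^ 2) ^ 2 ^ (m - 1) * x ^ 2 ^ (m - 1) = 0
    rw [hdsq, ha₀key]
    linear_combination (d ^ 2 * x ^ 2 + d * x ^ 2 ^ (m - 1)) * h2
  · show d ^ 2 * y ^ 2 + a₀ * y + (d ^ 2) ^ 2 ^ (m - 1) * y ^ 2 ^ (m - 1) = 0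
    rw [hdsq]
    have hx' : x * (d ^ 2 * y ^ 2 + a₀ * y + d * y ^ 2 ^ (m - 1)) = 0 := by
      linear_combination y * ha₀key + d * hdkey +
        (d * x * y ^ 2 ^ (m - 1) + d * x ^ 2 ^ (m - 1) * y) * h2
    exact (mul_eq_zero.mp hx').resolve_left hx
  · rintro ⟨c₀, c₁⟩ ⟨hane, hL1, hL2⟩
    have hc₁ : c₁ ≠ 0 := by
      rintro rfl
      have h1 : (0 : GaloisField 2 m) * x ^ 2 + c₀ * x +
          (0 : GaloisField 2 m) ^ 2 ^ (m - 1) * x ^ 2 ^ (m - 1) = 0 := hL1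
      rw [zero_mul, zero_add, zero_pow (by positivity), zero_mul, add_zero] at h1
      have : c₀ = 0 := (mul_eq_zero.mp h1).resolve_right hx
      exact hane (by simp [this])
    obtain ⟨e, hee, hes⟩ :
        ∃ e : GaloisField 2 m, e ^ 2 = c₁ ∧ c₁ ^ 2 ^ (m - 1) = e :=
      ⟨c₁ ^ 2 ^ (m - 1), sq_pow hm c₁, rfl⟩
    have hene : e ≠ 0 := by
      intro h; apply hc₁; rw [← hee, h]; ring
    have E1 : e ^ 2 * x ^ 2 + c₀ * x + e * x ^ 2 ^ (m - 1) = 0 := by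
      have h1 : c₁ * x ^ 2 + c₀ * x + c₁ ^ 2 ^ (m - 1) * x ^ 2 ^ (m - 1) = 0 := hL1
      rwa [hes, ← hee] at h1
    have E2 : e ^ 2 * y ^ 2 + c₀ * y + e * y ^ 2 ^ (m - 1) = 0 := by
      have h1 : c₁ * y ^ 2 + c₀ * y + c₁ ^ 2 ^ (m - 1) * y ^ 2 ^ (m - 1) = 0 := hL2
      rwa [hes, ← hee] at h1
    have hcomb : e * (e * (x * y * (x + y)) +
        (y * x ^ 2 ^ (m - 1) + x * y ^ 2 ^ (m - 1))) = 0 := by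
      linear_combination y * E1 + x * E2 - c₀ * x * y * h2
    have hinner := (mul_eq_zero.mp hcomb).resolve_left hene
    have hed : e * (x * y * (x + y)) = y * x ^ 2 ^ (m - 1) + x * y ^ 2 ^ (m - 1) := by
      have : e * (x * y * (x + y)) =
          -(y * x ^ 2 ^ (m - 1) + x * y ^ 2 ^ (m - 1)) := by linear_combination hinner
      rw [this, CharTwo.neg_eq]
    have heqd : e = d := mul_right_cancel₀ hden (by rw [hed, hdkey])
    have hc₀ : c₀ = a₀ := by
      apply mul_right_cancel₀ hx
      rw [ha₀key]
      have : c₀ * x = -(e ^ 2 * x ^ 2 + e * x ^ 2 ^ (m - 1)) := by linear_combination E1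
      rw [this, CharTwo.neg_eq, heqd]
    ext
    · exact hc₀
    · show c₁ = d ^ 2
      rw [← hee, heqd]

end basic

open scoped Classical

section counting
variable (hm : 1 ≤ m) [Fintype (GaloisField 2 m)]
include hm

/-- For fixed nonzero `x`, the nonzero pairs `a` with `L a x = 0` number `2^m - 1`. -/
lemma card_filter_one {x : GaloisField 2 m} (hx : x ≠ 0) :
    (univ.filter (fun a : GaloisField 2 m × GaloisField 2 m =>
      a ≠ 0 ∧ L m a x = 0)).card = 2 ^ m - 1 := by
  have h2 : (2 : GaloisField 2 m) = 0 := two_zero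
  have himg : (univ.filter (fun a : GaloisField 2 m × GaloisField 2 m =>
      a ≠ 0 ∧ L m a x = 0)) =
      (univ.filter (fun c : GaloisField 2 m => c ≠ 0)).image
        (fun c => ((c * x ^ 2 + c ^ 2 ^ (m - 1) * x ^ 2 ^ (m - 1)) / x, c)) := by
    ext a
    simp only [mem_filter, mem_univ, true_and, mem_image]
    constructor
    · rintro ⟨hane, hL⟩
      have hL' : a.2 * x ^ 2 + a.1 * x + a.2 ^ 2 ^ (m - 1) * x ^ 2 ^ (m - 1) = 0 := hL
      have ha2 : a.2 ≠ 0 := by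
        rintro h0
        rw [h0, zero_mul, zero_add, zero_pow (by positivity), zero_mul, add_zero] at hL'
        have : a.1 = 0 := (mul_eq_zero.mp hL').resolve_right hx
        exact hane (Prod.ext this h0)
      refine ⟨a.2, ha2, ?_⟩
      have ha1 : a.1 = (a.2 * x ^ 2 + a.2 ^ 2 ^ (m - 1) * x ^ 2 ^ (m - 1)) / x := by
        rw [eq_div_iff hx]
        linear_combination hL' - (a.2 * x ^ 2 + a.2 ^ 2 ^ (m - 1) * x ^ 2 ^ (m - 1)) * h2
      exact Prod.ext ha1.symm rfl
    · rintro ⟨c, hc, rfl⟩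
      constructor
      · intro h
        exact hc (congrArg Prod.snd h)
      · show c * x ^ 2 + _ * x + c ^ 2 ^ (m - 1) * x ^ 2 ^ (m - 1) = 0
        rw [div_mul_cancel₀ _ hx]
        linear_combination (c * x ^ 2 + c ^ 2 ^ (m - 1) * x ^ 2 ^ (m - 1)) * h2
  rw [himg, card_image_of_injective _ (fun c₁ c₂ h => congrArg Prod.snd h)]
  rw [filter_ne', card_erase_of_mem (mem_univ _), card_univ, ← Nat.card_eq_fintype_card,
    GaloisField.card 2 m (by omega)]

/-- For fixed distinct nonzero `x, y`, exactly one nonzero pair kills both. -/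
lemma card_filter_two {x y : GaloisField 2 m} (hx : x ≠ 0) (hy : y ≠ 0) (hxy : x ≠ y) :
    (univ.filter (fun a : GaloisField 2 m × GaloisField 2 m =>
      a ≠ 0 ∧ L m a x = 0 ∧ L m a y = 0)).card = 1 := by
  obtain ⟨a, ha, hun⟩ := exists_unique_pair hm hx hy hxy
  rw [Finset.card_eq_one]
  refine ⟨a, ?_⟩
  ext b
  simp only [mem_filter, mem_univ, true_and, mem_singleton]
  exact ⟨fun hb => hun b hb, fun hb => hb ▸ ha⟩

/-- The set of nonzero roots of `L a`. -/
noncomputable def K (m : ℕ) [Fintype (GaloisField 2 m)]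
    (a : GaloisField 2 m × GaloisField 2 m) : Finset (GaloisField 2 m) :=
  univ.filter (fun z => z ≠ 0 ∧ L m a z = 0)

/-- For `a ≠ 0`, `L a` has at most three nonzero roots. -/
lemma K_card_le {a : GaloisField 2 m × GaloisField 2 m} (ha : a ≠ 0) :
    (K m a).card ≤ 3 := by
  set b : GaloisField 2 m := a.2 ^ 2 ^ (m - 1) with hb
  have hb2 : b ^ 2 = a.2 := sq_pow hm a.2
  set p : Polynomial (GaloisField 2 m) :=
    Polynomial.C a.2 * Polynomial.X ^ 3 + Polynomial.C a.1 * Polynomial.X + Polynomial.C b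
    with hp
  have hpne : p ≠ 0 := by
    intro h0
    by_cases h2 : a.2 = 0
    · have hb0 : b = 0 := by rw [hb, h2, zero_pow (by positivity)]
      have h1 : a.1 ≠ 0 := by
        intro h1; exact ha (Prod.ext h1 h2)
      apply h1
      have : p.coeff 1 = 0 := by rw [h0]; simp
      simpa [hp, Polynomial.coeff_add, Polynomial.coeff_C_mul, Polynomial.coeff_X_pow,
        Polynomial.coeff_C, Polynomial.coeff_X] using this
    · apply h2
      have : p.coeff 3 = 0 := by rw [h0]; simp
      simpa [hp, Polynomial.coeff_add, Polynomial.coeff_C_mul, Polynomial.coeff_X_pow,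
        Polynomial.coeff_C, Polynomial.coeff_X] using this
  have hdeg : p.natDegree ≤ 3 := by
    rw [hp]; compute_degree
  have himg : (K m a).image (fun z => z ^ 2 ^ (m - 1)) ⊆ p.roots.toFinset := by
    intro z hz
    rw [mem_image] at hz
    obtain ⟨w, hw, rfl⟩ := hz
    rw [K, mem_filter] at hw
    obtain ⟨-, hw0, hLw⟩ := hw
    have hLw' : a.2 * w ^ 2 + a.1 * w + a.2 ^ 2 ^ (m - 1) * w ^ 2 ^ (m - 1) = 0 := hLw
    rw [Multiset.mem_toFinset, Polynomial.mem_roots hpne]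
    have hzw : (w ^ 2 ^ (m - 1)) ^ 2 = w := sq_pow hm w
    have hzne : w ^ 2 ^ (m - 1) ≠ 0 := by
      intro h; apply hw0; rw [← hzw, h]; ring
    have heval : w ^ 2 ^ (m - 1) * Polynomial.eval (w ^ 2 ^ (m - 1)) p = 0 := by
      have : Polynomial.eval (w ^ 2 ^ (m - 1)) p =
          a.2 * (w ^ 2 ^ (m - 1)) ^ 3 + a.1 * (w ^ 2 ^ (m - 1)) + b := by
        simp [hp]
      rw [this]
      calc w ^ 2 ^ (m - 1) *
            (a.2 * (w ^ 2 ^ (m - 1)) ^ 3 + a.1 * (w ^ 2 ^ (m - 1)) + b)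
          = a.2 * ((w ^ 2 ^ (m - 1)) ^ 2) ^ 2 + a.1 * (w ^ 2 ^ (m - 1)) ^ 2 +
            b * w ^ 2 ^ (m - 1) := by ring
        _ = a.2 * w ^ 2 + a.1 * w + a.2 ^ 2 ^ (m - 1) * w ^ 2 ^ (m - 1) := by
            rw [hzw, hb]
        _ = 0 := hLw'
    exact (mul_eq_zero.mp heval).resolve_left hzne
  have hinj : ((K m a).image (fun z => z ^ 2 ^ (m - 1))).card = (K m a).card :=
    card_image_of_injective _ (fun z₁ z₂ h => by
      have := congrArg (· ^ 2) h
      simpa [sq_pow hm] using this)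
  calc (K m a).card = ((K m a).image (fun z => z ^ 2 ^ (m - 1))).card := hinj.symm
    _ ≤ p.roots.toFinset.card := Finset.card_le_card himg
    _ ≤ Multiset.card p.roots := Multiset.toFinset_card_le _
    _ ≤ p.natDegree := p.card_roots'
    _ ≤ 3 := hdeg

/-- Sum of numbers of nonzero roots over all nonzero pairs. -/
lemma sum_K :
    ∑ a ∈ univ.filter (fun a : GaloisField 2 m × GaloisField 2 m => a ≠ 0),
      (K m a).card = (2 ^ m - 1) * (2 ^ m - 1) := by
  have hXcard : (univ.filter (fun z : GaloisField 2 m => z ≠ 0)).card = 2 ^ m - 1 := by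
    rw [filter_ne', card_erase_of_mem (mem_univ _), card_univ, ← Nat.card_eq_fintype_card,
      GaloisField.card 2 m (by omega)]
  calc ∑ a ∈ univ.filter (fun a : GaloisField 2 m × GaloisField 2 m => a ≠ 0), (K m a).card
      = ∑ a ∈ univ.filter (fun a : GaloisField 2 m × GaloisField 2 m => a ≠ 0),
          ∑ z ∈ univ.filter (fun z : GaloisField 2 m => z ≠ 0),
            (if L m a z = 0 then 1 else 0) := by
        refine Finset.sum_congr rfl fun a _ => ?_
        rw [← Finset.card_filter, K, filter_filter]
    _ = ∑ z ∈ univ.filter (fun z : GaloisField 2 m => z ≠ 0),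
          ∑ a ∈ univ.filter (fun a : GaloisField 2 m × GaloisField 2 m => a ≠ 0),
            (if L m a z = 0 then 1 else 0) := Finset.sum_comm
    _ = ∑ z ∈ univ.filter (fun z : GaloisField 2 m => z ≠ 0), (2 ^ m - 1) := by
        refine Finset.sum_congr rfl fun z hz => ?_
        rw [← Finset.card_filter, filter_filter]
        exact card_filter_one hm (by simpa using hz)
    _ = (2 ^ m - 1) * (2 ^ m - 1) := by
        rw [Finset.sum_const, smul_eq_mul, hXcard]

/-- Sum of ordered pairs of distinct nonzero roots over all nonzero pairs. -/
lemma sum_K_offDiag :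
    ∑ a ∈ univ.filter (fun a : GaloisField 2 m × GaloisField 2 m => a ≠ 0),
      (K m a).offDiag.card = (2 ^ m - 1) * (2 ^ m - 1) - (2 ^ m - 1) := by
  have hXcard : (univ.filter (fun z : GaloisField 2 m => z ≠ 0)).card = 2 ^ m - 1 := by
    rw [filter_ne', card_erase_of_mem (mem_univ _), card_univ, ← Nat.card_eq_fintype_card,
      GaloisField.card 2 m (by omega)]
  set X : Finset (GaloisField 2 m) := univ.filter (fun z => z ≠ 0) with hX
  have hoff : ∀ a : GaloisField 2 m × GaloisField 2 m, (K m a).offDiag =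
      (X ×ˢ X).filter (fun p => p.1 ≠ p.2 ∧ L m a p.1 = 0 ∧ L m a p.2 = 0) := by
    intro a
    ext ⟨u, v⟩
    simp only [Finset.mem_offDiag, K, mem_filter, mem_univ, true_and, mem_product, hX]
    tauto
  calc ∑ a ∈ univ.filter (fun a : GaloisField 2 m × GaloisField 2 m => a ≠ 0),
        (K m a).offDiag.card
      = ∑ a ∈ univ.filter (fun a : GaloisField 2 m × GaloisField 2 m => a ≠ 0),
          ∑ p ∈ X ×ˢ X, (if p.1 ≠ p.2 ∧ L m a p.1 = 0 ∧ L m a p.2 = 0 then 1 else 0) := by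
        refine Finset.sum_congr rfl fun a _ => ?_
        rw [hoff a, Finset.card_filter]
    _ = ∑ p ∈ X ×ˢ X,
          ∑ a ∈ univ.filter (fun a : GaloisField 2 m × GaloisField 2 m => a ≠ 0),
            (if p.1 ≠ p.2 ∧ L m a p.1 = 0 ∧ L m a p.2 = 0 then 1 else 0) :=
        Finset.sum_comm
    _ = ∑ p ∈ X ×ˢ X, (if p.1 ≠ p.2 then 1 else 0) := by
        refine Finset.sum_congr rfl fun p hp => ?_
        rw [mem_product] at hp
        have hu : p.1 ≠ 0 := by have := hp.1; rw [hX, mem_filter] at this; exact this.2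
        have hv : p.2 ≠ 0 := by have := hp.2; rw [hX, mem_filter] at this; exact this.2
        by_cases huv : p.1 = p.2
        · simp [huv]
        · simp only [huv, ne_eq, not_false_eq_true, true_and, if_true]
          rw [← Finset.card_filter, filter_filter]
          exact card_filter_two hm hu hv huv
    _ = ((X ×ˢ X).filter (fun p => p.1 ≠ p.2)).card := (Finset.card_filter _ _).symm
    _ = X.offDiag.card := by
        congr 1
        ext p; rw [mem_filter, mem_product, Finset.mem_offDiag, and_assoc]
    _ = (2 ^ m - 1) * (2 ^ m - 1) - (2 ^ m - 1) := by
        rw [Finset.offDiag_card, hXcard]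

end counting
end Stmt18Aux


open Stmt18Aux in
/-- The number of pairs `(a₀, a₁) ∈ GF(2^m)²` for which the linearized polynomial
`L_{(a₀,a₁)}(x) = a₁ x² + a₀ x + a₁^{2^{m-1}} x^{2^{m-1}}` has no nonzero root (i.e. the
corresponding symmetric bilinear form `Tr(y·L_{(a₀,a₁)}(x))` is nonsingular) is at least
`4^{m-1}`. -/
theorem stmt18 (m : ℕ) (hm : 3 ≤ m) :
    4 ^ (m - 1) ≤
      @Fintype.card
        {p : GaloisField 2 m × GaloisField 2 m //
          ∀ x : GaloisField 2 m,
            p.2 * x ^ 2 + p.1 * x + p.2 ^ (2 ^ (m - 1)) * x ^ (2 ^ (m - 1)) = 0 → x = 0}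
        (Fintype.ofFinite _) := by
  classical
  letI : Fintype (GaloisField 2 m) := Fintype.ofFinite _
  have hm1 : 1 ≤ m := by omega
  have hE : Fintype.card (GaloisField 2 m) = 2 ^ m := by
    rw [← Nat.card_eq_fintype_card]; exact GaloisField.card 2 m (by omega)
  set pred : GaloisField 2 m × GaloisField 2 m → Prop :=
    fun p => ∀ x : GaloisField 2 m,
      p.2 * x ^ 2 + p.1 * x + p.2 ^ (2 ^ (m - 1)) * x ^ (2 ^ (m - 1)) = 0 → x = 0 with hpred
  set Good : Finset (GaloisField 2 m × GaloisField 2 m) := univ.filter pred with hGooddef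
  have hcc : @Fintype.card {p // pred p} (Fintype.ofFinite _) = Good.card := by
    convert Fintype.card_of_subtype (p := pred) Good (fun a => by simp [hGooddef]) using 2
  rw [hcc]
  set A : Finset (GaloisField 2 m × GaloisField 2 m) := univ.filter (fun a => a ≠ 0) with hA
  set Bad : Finset (GaloisField 2 m × GaloisField 2 m) :=
    univ.filter (fun a => ¬ pred a) with hBad
  set Bad' : Finset (GaloisField 2 m × GaloisField 2 m) := Bad.erase 0 with hBad'def
  have hpredL : ∀ a, pred a ↔ ∀ z, L m a z = 0 → z = 0 := fun a => Iff.rfl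
  have hGB : Good.card + Bad.card = 2 ^ m * 2 ^ m := by
    rw [hGooddef, hBad, Finset.card_filter_add_card_filter_not, card_univ,
      Fintype.card_prod, hE]
  have hBadle : Bad.card ≤ Bad'.card + 1 := by
    have hsub : Bad ⊆ insert (0 : GaloisField 2 m × GaloisField 2 m) Bad' := by
      intro a ha
      by_cases h0 : a = 0
      · simp [h0]
      · exact mem_insert_of_mem (mem_erase.mpr ⟨h0, ha⟩)
    calc Bad.card ≤ (insert (0 : GaloisField 2 m × GaloisField 2 m) Bad').card :=
          card_le_card hsub
      _ ≤ Bad'.card + 1 := card_insert_le _ _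
  have hsubA : Bad' ⊆ A := fun a ha =>
    mem_filter.mpr ⟨mem_univ _, (mem_erase.mp ha).1⟩
  have hper : ∀ a ∈ Bad', 3 + (K m a).offDiag.card ≤ 3 * (K m a).card := by
    intro a ha
    have hane : a ≠ 0 := (mem_erase.mp ha).1
    have hbad : ¬ pred a := (mem_filter.mp (mem_erase.mp ha).2).2
    have hbad' : ¬ ∀ z, L m a z = 0 → z = 0 := fun h => hbad ((hpredL a).mpr h)
    push_neg at hbad'
    obtain ⟨z, hz1, hz2⟩ := hbad'
    have hk1 : 1 ≤ (K m a).card := by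
      refine Finset.card_pos.mpr ⟨z, ?_⟩
      rw [K, mem_filter]
      exact ⟨mem_univ _, hz2, hz1⟩
    have hk3 := K_card_le hm1 hane
    rw [Finset.offDiag_card]
    obtain ⟨k, hk⟩ : ∃ k, (K m a).card = k := ⟨_, rfl⟩
    rw [hk] at hk1 hk3 ⊢
    interval_cases k <;> omega
  have hchain : 3 * Bad'.card + ∑ a ∈ Bad', (K m a).offDiag.card ≤
      ∑ a ∈ Bad', 3 * (K m a).card := by
    have h1 : 3 * Bad'.card = ∑ _a ∈ Bad', 3 := by
      rw [Finset.sum_const, smul_eq_mul, mul_comm]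
    rw [h1, ← Finset.sum_add_distrib]
    exact Finset.sum_le_sum hper
  have hsum2 : ∑ a ∈ A, (K m a).offDiag.card = ∑ a ∈ Bad', (K m a).offDiag.card := by
    refine (Finset.sum_subset hsubA ?_).symm
    intro a haA haB
    have hane : a ≠ 0 := (mem_filter.mp haA).2
    have hgood : pred a := by
      by_contra hng
      exact haB (mem_erase.mpr ⟨hane, mem_filter.mpr ⟨mem_univ _, hng⟩⟩)
    have hKempty : K m a = ∅ := by
      rw [Finset.eq_empty_iff_forall_notMem]
      intro z hz
      rw [K, mem_filter] at hz
      exact hz.2.1 (((hpredL a).mp hgood) z hz.2.2)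
    rw [hKempty]
    simp
  have hsum1 : ∑ a ∈ Bad', 3 * (K m a).card ≤ 3 * ((2 ^ m - 1) * (2 ^ m - 1)) := by
    calc ∑ a ∈ Bad', 3 * (K m a).card ≤ ∑ a ∈ A, 3 * (K m a).card :=
          Finset.sum_le_sum_of_subset hsubA
      _ = 3 * ∑ a ∈ A, (K m a).card := by rw [Finset.mul_sum]
      _ = 3 * ((2 ^ m - 1) * (2 ^ m - 1)) := by rw [sum_K hm1]
  have key : 3 * Bad'.card + ((2 ^ m - 1) * (2 ^ m - 1) - (2 ^ m - 1)) ≤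
      3 * ((2 ^ m - 1) * (2 ^ m - 1)) := by
    rw [← sum_K_offDiag hm1, hsum2]
    exact le_trans hchain hsum1
  have hq8 : (8 : ℕ) ≤ 2 ^ m := by
    calc (8 : ℕ) = 2 ^ 3 := rfl
      _ ≤ 2 ^ m := Nat.pow_le_pow_right (by norm_num) hm
  have h4 : 4 * 4 ^ (m - 1) = 2 ^ m * 2 ^ m := by
    have h1 : 4 * 4 ^ (m - 1) = 4 ^ m := by
      rw [← pow_succ']
      congr 1
      omega
    rw [h1, show (4 : ℕ) = 2 * 2 from rfl, Nat.mul_pow]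
  have hsq : 2 ^ m * 2 ^ m = (2 ^ m - 1) * (2 ^ m - 1) + 2 * (2 ^ m - 1) + 1 := by
    have h2m : 2 ^ m = (2 ^ m - 1) + 1 := by omega
    calc 2 ^ m * 2 ^ m = ((2 ^ m - 1) + 1) * ((2 ^ m - 1) + 1) := by rw [← h2m]
      _ = (2 ^ m - 1) * (2 ^ m - 1) + 2 * (2 ^ m - 1) + 1 := by ring
  have huv : (2 ^ m - 1) ≤ (2 ^ m - 1) * (2 ^ m - 1) :=
    Nat.le_mul_of_pos_left _ (by omega)
  have hw1 : 1 ≤ 2 ^ m - 1 := by omega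
  generalize hv : (2 ^ m - 1) * (2 ^ m - 1) = v at key hsq huv
  generalize hw : 2 ^ m - 1 = w at key hsq huv hw1
  generalize hQ : 2 ^ m * 2 ^ m = Q at hGB hsq h4
  generalize ht : 4 ^ (m - 1) = t at h4 ⊢
  omega
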